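/- arXiv:2002.04144 — 3 statements merged into one kernel-verified Lean document; each statement's English description precedes it below -/
import Mathlib

section
/- For every real x with 0 < x ≤ 0.4, one has x·coth(x) − 1 ≤ 1/16 and 1 − x·cot(x) ≤ 1/16. Hence if the sectional curvature satisfies |K| ≤ 0.16/D², then the discrepancy-related quantity max{ζ−1, 1−δ} is at most 1/16, where ζ = √(|K_min|)·D·coth(√(|K_min|)·D) and δ = √(|K_max|)·D·cot(√(|K_max|)·D). -/
open Real

lemma key (x : ℝ) (hx : 0 < x) (hx4 : x ≤ 0.4) :
    x * (Real.cosh x / Real.sinh x) - 1 ≤ 1 / 16 ∧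
    1 - x * (Real.cos x / Real.sin x) ≤ 1 / 16 := by
  have hx1 : |x| ≤ 1 := by rw [abs_of_pos hx]; linarith
  have hxneg : |(-x)| ≤ 1 := by rwa [abs_neg]
  have he1 := Real.exp_bound hx1 (n := 4) (by norm_num)
  have he2 := Real.exp_bound hxneg (n := 4) (by norm_num)
  have hsum : ∑ i ∈ Finset.range 4, x ^ i / i.factorial
      = 1 + x + x^2/2 + x^3/6 := by
    simp [Finset.sum_range_succ, Nat.factorial]
    try ring
  have hsum2 : ∑ i ∈ Finset.range 4, (-x) ^ i / i.factorial
      = 1 - x + x^2/2 - x^3/6 := by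
    simp [Finset.sum_range_succ, Nat.factorial]; ring
  rw [hsum] at he1
  rw [hsum2, abs_neg, abs_of_pos hx] at he2
  rw [abs_of_pos hx] at he1
  norm_num [Nat.factorial] at he1 he2
  rw [abs_le] at he1 he2
  have hs : Real.sinh x = (Real.exp x - Real.exp (-x)) / 2 := Real.sinh_eq x
  have hc : Real.cosh x = (Real.exp x + Real.exp (-x)) / 2 := Real.cosh_eq x
  have hsinh_pos : 0 < Real.sinh x := Real.sinh_pos_iff.2 hx
  have hsin_pos : 0 < Real.sin x := Real.sin_pos_of_pos_of_lt_pi hx (by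
    have := Real.pi_gt_three; linarith)
  have hcb := Real.cos_bound hx1
  have hsb := Real.sin_bound hx1
  rw [abs_of_pos hx, abs_le] at hcb hsb
  norm_num [Nat.factorial] at he1 he2
  constructor
  · have h17 : x * (Real.cosh x / Real.sinh x) ≤ 17/16 := by
      rw [← mul_div_assoc, div_le_iff₀ hsinh_pos]
      nlinarith [pow_pos hx 4, pow_pos hx 3, pow_pos hx 5, sq_nonneg x,
        he1.1, he1.2, he2.1, he2.2]
    linarith
  · have h15 : (15:ℝ)/16 ≤ x * (Real.cos x / Real.sin x) := by
      rw [← mul_div_assoc, le_div_iff₀ hsin_pos]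
      nlinarith [pow_pos hx 4, pow_pos hx 3, pow_pos hx 5, sq_nonneg x,
        hcb.1, hcb.2, hsb.1, hsb.2]
    linarith

theorem stmt_2 :
    (∀ x : ℝ, 0 < x → x ≤ 0.4 →
      x * (Real.cosh x / Real.sinh x) - 1 ≤ 1 / 16 ∧
      1 - x * (Real.cos x / Real.sin x) ≤ 1 / 16) ∧
    (∀ Kmin Kmax D : ℝ, 0 < D → Kmin ≠ 0 → Kmax ≠ 0 →
      |Kmin| ≤ 0.16 / D ^ 2 → |Kmax| ≤ 0.16 / D ^ 2 →
      max
        (Real.sqrt |Kmin| * D *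
          (Real.cosh (Real.sqrt |Kmin| * D) / Real.sinh (Real.sqrt |Kmin| * D)) - 1)
        (1 - Real.sqrt |Kmax| * D *
          (Real.cos (Real.sqrt |Kmax| * D) / Real.sin (Real.sqrt |Kmax| * D)))
      ≤ 1 / 16) := by
  have key' := key
  refine ⟨key', fun Kmin Kmax D hD hK1 hK2 hb1 hb2 => ?_⟩
  have hD2 : (0:ℝ) < D ^ 2 := by positivity
  have hx : ∀ K : ℝ, K ≠ 0 → |K| ≤ 0.16 / D ^ 2 →
      0 < Real.sqrt |K| * D ∧ Real.sqrt |K| * D ≤ 0.4 := by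
    intro K hK hb
    have hKpos : 0 < |K| := abs_pos.2 hK
    have h1 : 0 < Real.sqrt |K| * D := by positivity
    refine ⟨h1, ?_⟩
    have hsq : (Real.sqrt |K| * D) ^ 2 ≤ (0.4:ℝ) ^ 2 := by
      rw [mul_pow, Real.sq_sqrt (abs_nonneg K)]
      calc |K| * D ^ 2 ≤ (0.16 / D ^ 2) * D ^ 2 := by
            exact mul_le_mul_of_nonneg_right hb hD2.le
        _ = 0.16 := by field_simp
        _ = (0.4:ℝ)^2 := by norm_num
    nlinarith [h1, hsq]
  obtain ⟨h1p, h1b⟩ := hx Kmin hK1 hb1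
  obtain ⟨h2p, h2b⟩ := hx Kmax hK2 hb2
  exact max_le ((key' _ h1p h1b).1) ((key' _ h2p h2b).2)
end

section
/- Let ζ ≥ 1, L > 0, and define sequences (a_k), (A_k) by A_0 = 0, a_{k+1} the positive root of ζ·a_{k+1}² / (A_k + a_{k+1}) = 1/L, and A_{k+1} = A_k + a_{k+1}. Then for all k ≥ 0, A_k ≥ k² / (4·ζ·L). -/
theorem stmt_3 (ζ L : ℝ) (hζ : 1 ≤ ζ) (hL : 0 < L)
    (a A : ℕ → ℝ) (hA0 : A 0 = 0)
    (ha_pos : ∀ k : ℕ, 0 < a (k + 1))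
    (ha_eq : ∀ k : ℕ, ζ * (a (k + 1)) ^ 2 / (A k + a (k + 1)) = 1 / L)
    (hA : ∀ k : ℕ, A (k + 1) = A k + a (k + 1)) :
    ∀ k : ℕ, A k ≥ (k : ℝ) ^ 2 / (4 * ζ * L) := by
  have hζ0 : (0:ℝ) < ζ := lt_of_lt_of_le one_pos hζ
  have hc : 0 < ζ * L := mul_pos hζ0 hL
  intro k
  induction k with
  | zero => simp [hA0]
  | succ n ih =>
    have hn0 : (0:ℝ) ≤ (n:ℝ) := Nat.cast_nonneg n
    have hAn : 0 ≤ A n := le_trans (by positivity) ih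
    have han := ha_pos n
    have hden : 0 < A n + a (n + 1) := by linarith
    have heq : ζ * L * (a (n + 1)) ^ 2 = A n + a (n + 1) := by
      have h := ha_eq n
      rw [div_eq_div_iff hden.ne' hL.ne'] at h
      linarith
    have ihm : (n:ℝ) ^ 2 ≤ A n * (4 * ζ * L) := by
      rw [ge_iff_le, div_le_iff₀ (by positivity)] at ih
      linarith
    set s := 2 * (ζ * L) * a (n + 1) with hs_def
    have hs0 : 0 < s := by positivity
    have h1 : s ^ 2 ≥ (n:ℝ) ^ 2 + 2 * s := by
      have : s ^ 2 = 4 * (ζ * L) * (A n + a (n + 1)) := by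
        rw [hs_def, ← heq]; ring
      nlinarith [ihm]
    have hsn : s ≥ (n:ℝ) + 1 := by
      by_contra hcon
      push_neg at hcon
      nlinarith [mul_pos hs0 (sub_pos.mpr hcon), mul_nonneg hn0 (le_of_lt (sub_pos.mpr hcon))]
    have ha_ge : a (n + 1) ≥ ((n:ℝ) + 1) / (2 * (ζ * L)) := by
      rw [ge_iff_le, div_le_iff₀ (by positivity)]
      nlinarith [hsn]
    rw [hA, ge_iff_le, div_le_iff₀ (by positivity)]
    push_cast
    nlinarith [ihm, ha_ge, hc]
end

section
/- Let f : ℝⁿ → ℝ be convex, differentiable, with L-Lipschitz gradient, let x* be a minimizer of f, and let ζ ≥ 1. Consider sequences defined by A_0 = 0, arbitrary points y_k with f(y_k) ≤ f(x_k) and ⟨∇f(y_k), v_k − y_k⟩ ≥ 0, x_{k+1} = y_k − (1/L)∇f(y_k), a_{k+1} > 0 with ζ·a_{k+1}²/(A_k + a_{k+1}) = 1/L, A_{k+1} = A_k + a_{k+1}, and v_{k+1} = v_k − a_{k+1}∇f(y_k), started at x_0 = v_0. Define ψ_k* recursively by ψ_0* = 0 and ψ_{k+1}* = ψ_k* + a_{k+1}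 f(y_k) − (ζ·a_{k+1}²/2)·‖∇f(y_k)‖². Then for all k: (C1) A_k·f(x_k) ≤ ψ_k*, and (C2) ψ_{k+1}* + ½‖v_{k+1} − x*‖² ≤ ψ_k* + ½‖v_k − x*‖² + a_{k+1}·(f(y_k) + ⟨∇f(y_k), x* − y_k⟩). Consequently, f(x_k) − f(x*) ≤ 2·ζ·L·‖x_0 − x*‖²/k². -/
open RealInnerProductSpace

variable {E : Type*} [NormedAddCommGroup E] [InnerProductSpace ℝ E] [CompleteSpace E]

lemma aux_deriv (f : E → ℝ) (hdiff : Differentiable ℝ f) (w d : E) (t : ℝ) :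
    HasDerivAt (fun s : ℝ => f (w + s • d)) ⟪gradient f (w + t • d), d⟫ t := by
  have h1 : HasFDerivAt f (InnerProductSpace.toDual ℝ E (gradient f (w + t • d))) (w + t • d) :=
    (hdiff _).hasGradientAt
  have h2 : HasDerivAt (fun s : ℝ => w + s • d) d t := by
    simpa using ((hasDerivAt_id t).smul_const d).const_add w
  exact h1.comp_hasDerivAt t h2

lemma convex_tangent (f : E → ℝ) (hdiff : Differentiable ℝ f)
    (hconv : ConvexOn ℝ Set.univ f) (w z : E) :
    f w + ⟪gradient f w, z - w⟫ ≤ f z := by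
  have hphi : ConvexOn ℝ Set.univ (fun t : ℝ => f (w + t • (z - w))) := by
    have h := hconv.comp_affineMap (AffineMap.lineMap w z : ℝ →ᵃ[ℝ] E)
    simp only [Set.preimage_univ] at h
    have e : (fun t : ℝ => f (w + t • (z - w))) = f ∘ AffineMap.lineMap w z := by
      ext t; simp [AffineMap.lineMap_apply, add_comm]
    rw [e]; exact h
  have hd : HasDerivAt (fun t : ℝ => f (w + t • (z - w))) ⟪gradient f w, z - w⟫ 0 := by
    simpa using aux_deriv f hdiff w (z - w) 0
  have hs := hphi.le_slope_of_hasDerivAt (Set.mem_univ (0:ℝ)) (Set.mem_univ (1:ℝ)) one_pos hd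
  simp [slope_def_field] at hs
  have hg : ⟪gradient f w, z - w⟫ = (fderiv ℝ f w) z - (fderiv ℝ f w) w := by
    simp [gradient, inner_sub_right]
  linarith

lemma smooth_upper (f : E → ℝ) (hdiff : Differentiable ℝ f) (L : ℝ) (hL : 0 < L)
    (hlip : ∀ x y, ‖gradient f x - gradient f y‖ ≤ L * ‖x - y‖) (w z : E) :
    f z ≤ f w + ⟪gradient f w, z - w⟫ + L / 2 * ‖z - w‖ ^ 2 := by
  set d := z - w with hd
  set φ' : ℝ → ℝ := fun t => ⟪gradient f (w + t • d), d⟫ with hφ'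
  have hderiv : ∀ t ∈ Set.uIcc (0:ℝ) 1, HasDerivAt (fun s : ℝ => f (w + s • d)) (φ' t) t :=
    fun t _ => aux_deriv f hdiff w d t
  have hgc : Continuous (gradient f) := by
    apply LipschitzWith.continuous (K := L.toNNReal)
    apply LipschitzWith.of_dist_le_mul
    intro p q
    simpa [dist_eq_norm, Real.coe_toNNReal L hL.le] using hlip p q
  have hcont : Continuous φ' := by
    apply Continuous.inner
    · exact hgc.comp (by continuity)
    · exact continuous_const
  have hint : IntervalIntegrable φ' MeasureTheory.volume 0 1 := hcont.intervalIntegrable 0 1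
  have heq : ∫ t in (0:ℝ)..1, φ' t = f (w + (1:ℝ) • d) - f (w + (0:ℝ) • d) :=
    intervalIntegral.integral_eq_sub_of_hasDerivAt hderiv hint
  have hbound : ∀ t ∈ Set.Icc (0:ℝ) 1, φ' t ≤ ⟪gradient f w, d⟫ + L * ‖d‖ ^ 2 * t := by
    intro t ht
    have h1 : φ' t - ⟪gradient f w, d⟫ = ⟪gradient f (w + t • d) - gradient f w, d⟫ := by
      rw [inner_sub_left]
    have h2 : ⟪gradient f (w + t • d) - gradient f w, d⟫ ≤
        ‖gradient f (w + t • d) - gradient f w‖ * ‖d‖ := real_inner_le_norm _ _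
    have h3 : ‖gradient f (w + t • d) - gradient f w‖ ≤ L * (t * ‖d‖) := by
      have := hlip (w + t • d) w
      simpa [norm_smul, abs_of_nonneg ht.1] using this
    nlinarith [norm_nonneg d, mul_le_mul_of_nonneg_right h3 (norm_nonneg d)]
  have hrhs : IntervalIntegrable (fun t => ⟪gradient f w, d⟫ + L * ‖d‖ ^ 2 * t)
      MeasureTheory.volume 0 1 := (Continuous.intervalIntegrable (by continuity)) 0 1
  have hmono := intervalIntegral.integral_mono_on (by norm_num : (0:ℝ) ≤ 1) hint hrhs hbound
  have hcomp : ∫ t in (0:ℝ)..1, (⟪gradient f w, d⟫ + L * ‖d‖ ^ 2 * t) =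
      ⟪gradient f w, d⟫ + L / 2 * ‖d‖ ^ 2 := by
    rw [intervalIntegral.integral_add (intervalIntegrable_const)
      ((Continuous.intervalIntegrable (by continuity)) 0 1),
      intervalIntegral.integral_const_mul, integral_id]
    simp
    ring
  simp only [one_smul, zero_smul, add_zero] at heq
  have hz : w + d = z := by rw [hd]; abel
  rw [hz] at heq
  linarith [heq ▸ hmono, hcomp ▸ hmono]

lemma descent (f : E → ℝ) (hdiff : Differentiable ℝ f) (L : ℝ) (hL : 0 < L)
    (hlip : ∀ x y, ‖gradient f x - gradient f y‖ ≤ L * ‖x - y‖) (w : E) :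
    f (w - (1 / L) • gradient f w) ≤ f w - 1 / (2 * L) * ‖gradient f w‖ ^ 2 := by
  have h := smooth_upper f hdiff L hL hlip w (w - (1 / L) • gradient f w)
  have h1 : w - (1 / L) • gradient f w - w = -((1 / L) • gradient f w) := by abel
  rw [h1] at h
  have h2 : ⟪gradient f w, -((1 / L) • gradient f w)⟫ = -(1 / L) * ‖gradient f w‖ ^ 2 := by
    rw [inner_neg_right, real_inner_smul_right, real_inner_self_eq_norm_sq]
    ring
  have h3 : ‖-((1 / L) • gradient f w)‖ ^ 2 = (1 / L) ^ 2 * ‖gradient f w‖ ^ 2 := by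
    rw [norm_neg, norm_smul, mul_pow, Real.norm_eq_abs, sq_abs]
  rw [h2, h3] at h
  have hL' : L ≠ 0 := hL.ne'
  have : L / 2 * ((1 / L) ^ 2 * ‖gradient f w‖ ^ 2) - (1 / L) * ‖gradient f w‖ ^ 2 =
      -(1 / (2 * L) * ‖gradient f w‖ ^ 2) := by field_simp; ring
  linarith

set_option maxHeartbeats 1000000 in
theorem stmt_14 {n : ℕ} (f : EuclideanSpace ℝ (Fin n) → ℝ)
    (hdiff : Differentiable ℝ f) (hconv : ConvexOn ℝ Set.univ f)
    (L : ℝ) (hL : 0 < L)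
    (hlip : ∀ x y, ‖gradient f x - gradient f y‖ ≤ L * ‖x - y‖)
    (xstar : EuclideanSpace ℝ (Fin n)) (hmin : ∀ z, f xstar ≤ f z)
    (ζ : ℝ) (hζ : 1 ≤ ζ)
    (x v y : ℕ → EuclideanSpace ℝ (Fin n)) (a A ψ : ℕ → ℝ)
    (hx0v0 : x 0 = v 0) (hA0 : A 0 = 0)
    (hy1 : ∀ k, f (y k) ≤ f (x k))
    (hy2 : ∀ k, ⟪gradient f (y k), v k - y k⟫ ≥ 0)
    (hxstep : ∀ k, x (k + 1) = y k - (1 / L) • gradient f (y k))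
    (ha_pos : ∀ k, 0 < a (k + 1))
    (ha_eq : ∀ k, ζ * (a (k + 1)) ^ 2 / (A k + a (k + 1)) = 1 / L)
    (hA : ∀ k, A (k + 1) = A k + a (k + 1))
    (hvstep : ∀ k, v (k + 1) = v k - a (k + 1) • gradient f (y k))
    (hψ0 : ψ 0 = 0)
    (hψ : ∀ k, ψ (k + 1) =
      ψ k + a (k + 1) * f (y k) - (ζ * (a (k + 1)) ^ 2 / 2) * ‖gradient f (y k)‖ ^ 2) :
    (∀ k, A k * f (x k) ≤ ψ k) ∧
    (∀ k, ψ (k + 1) + (1 / 2) * ‖v (k + 1) - xstar‖ ^ 2 ≤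
      ψ k + (1 / 2) * ‖v k - xstar‖ ^ 2 +
        a (k + 1) * (f (y k) + ⟪gradient f (y k), xstar - y k⟫)) ∧
    (∀ k : ℕ, 1 ≤ k →
      f (x k) - f xstar ≤ 2 * ζ * L * ‖x 0 - xstar‖ ^ 2 / (k : ℝ) ^ 2) := by
  have hζ0 : (0:ℝ) < ζ := lt_of_lt_of_le one_pos hζ
  -- A (k+1) = ζ * L * a(k+1)^2
  have hAa : ∀ k, A (k + 1) = ζ * L * (a (k + 1)) ^ 2 := by
    intro k
    have h := ha_eq k
    have hden : A k + a (k + 1) ≠ 0 := by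
      intro h0
      rw [h0, div_zero] at h
      exact absurd h.symm (ne_of_gt (by positivity))
    rw [div_eq_div_iff hden hL.ne'] at h
    rw [hA k]
    linarith [h]
  have hApos : ∀ k, 0 < A (k + 1) := by
    intro k
    rw [hAa k]
    have := ha_pos k
    positivity
  have hAnonneg : ∀ k, 0 ≤ A k := by
    intro k
    cases k with
    | zero => rw [hA0]
    | succ k => exact (hApos k).le
  -- C1
  have hC1 : ∀ k, A k * f (x k) ≤ ψ k := by
    intro k
    induction k with
    | zero => simp [hA0, hψ0]
    | succ k ih =>
      have hdes : f (x (k + 1)) ≤ f (y k) - 1 / (2 * L) * ‖gradient f (y k)‖ ^ 2 := by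
        rw [hxstep k]; exact descent f hdiff L hL hlip (y k)
      have h1 : A k * f (y k) ≤ A k * f (x k) :=
        mul_le_mul_of_nonneg_left (hy1 k) (hAnonneg k)
      have h2 : A (k + 1) * f (x (k + 1)) ≤
          A (k + 1) * (f (y k) - 1 / (2 * L) * ‖gradient f (y k)‖ ^ 2) :=
        mul_le_mul_of_nonneg_left hdes (hAnonneg (k + 1))
      have heq2 : ζ * (a (k + 1)) ^ 2 / 2 * ‖gradient f (y k)‖ ^ 2 =
          A (k + 1) * (1 / (2 * L) * ‖gradient f (y k)‖ ^ 2) := by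
        rw [hAa k]; field_simp
      have h5 : A (k + 1) * f (y k) = A k * f (y k) + a (k + 1) * f (y k) := by
        rw [hA k]; ring
      rw [hψ k]
      nlinarith [ih, h1, h2, heq2, h5]
  -- C2
  have hC2 : ∀ k, ψ (k + 1) + (1 / 2) * ‖v (k + 1) - xstar‖ ^ 2 ≤
      ψ k + (1 / 2) * ‖v k - xstar‖ ^ 2 +
        a (k + 1) * (f (y k) + ⟪gradient f (y k), xstar - y k⟫) := by
    intro k
    have hnorm : ‖v (k + 1) - xstar‖ ^ 2 = ‖v k - xstar‖ ^ 2
        - 2 * (a (k + 1)) * ⟪gradient f (y k), v k - xstar⟫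
        + (a (k + 1)) ^ 2 * ‖gradient f (y k)‖ ^ 2 := by
      rw [hvstep k, sub_right_comm, norm_sub_sq_real, real_inner_smul_right,
        real_inner_comm, norm_smul, mul_pow, Real.norm_eq_abs, sq_abs]
      ring
    have hinner : ⟪gradient f (y k), xstar - y k⟫ + ⟪gradient f (y k), v k - xstar⟫ =
        ⟪gradient f (y k), v k - y k⟫ := by
      rw [← inner_add_right]
      congr 1
      abel
    have hvy := hy2 k
    have hap := ha_pos k
    rw [hψ k, hnorm]
    nlinarith [mul_nonneg hap.le hvy,
      mul_nonneg (mul_nonneg (sub_nonneg.mpr hζ) (sq_nonneg (a (k + 1))))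
        (sq_nonneg ‖gradient f (y k)‖)]
  -- telescoping
  have hΦ : ∀ k, ψ k + 1 / 2 * ‖v k - xstar‖ ^ 2 ≤
      1 / 2 * ‖v 0 - xstar‖ ^ 2 + A k * f xstar := by
    intro k
    induction k with
    | zero => simp [hψ0, hA0]
    | succ k ih =>
      have h2 := hC2 k
      have h3 : f (y k) + ⟪gradient f (y k), xstar - y k⟫ ≤ f xstar := by
        have := convex_tangent f hdiff hconv (y k) xstar
        linarith
      have h4 := mul_le_mul_of_nonneg_left h3 (ha_pos k).le
      have hexp : A (k + 1) * f xstar = A k * f xstar + a (k + 1) * f xstar := by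
        rw [hA k]; ring
      linarith
  -- growth
  have hgrow : ∀ k : ℕ, (k : ℝ) ^ 2 ≤ 4 * (ζ * L) * A k := by
    intro k
    induction k with
    | zero => simp [hA0]
    | succ k ih =>
      have hc0 : 0 < ζ * L := mul_pos hζ0 hL
      have hA1 : A (k + 1) = ζ * L * (a (k + 1)) ^ 2 := hAa k
      have hap := ha_pos k
      have hAk : A k = ζ * L * (a (k + 1)) ^ 2 - a (k + 1) := by
        have := hA k; linarith [hA1]
      have hge1 : 1 ≤ ζ * L * a (k + 1) := by
        nlinarith [ih, sq_nonneg (k : ℝ), mul_pos hc0 hap]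
      have hk : (k : ℝ) ≤ 2 * (ζ * L) * a (k + 1) - 1 := by
        nlinarith [ih, (Nat.cast_nonneg k : (0:ℝ) ≤ (k:ℝ))]
      have hsq : ((k : ℝ) + 1) ^ 2 ≤ (2 * (ζ * L) * a (k + 1)) ^ 2 := by
        nlinarith [hk, (Nat.cast_nonneg k : (0:ℝ) ≤ (k:ℝ))]
      push_cast
      nlinarith [hsq, hA1]
  refine ⟨hC1, hC2, ?_⟩
  intro k hk
  have hk1 : (1 : ℝ) ≤ (k : ℝ) := Nat.one_le_cast.mpr hk
  have hk2 : (0 : ℝ) < (k : ℝ) ^ 2 := by positivity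
  have hA4 := hgrow k
  have hbound : A k * (f (x k) - f xstar) ≤ 1 / 2 * ‖x 0 - xstar‖ ^ 2 := by
    have h0 : (0:ℝ) ≤ ‖v k - xstar‖ ^ 2 := sq_nonneg _
    rw [hx0v0]
    nlinarith [hC1 k, hΦ k]
  have hfge : 0 ≤ f (x k) - f xstar := sub_nonneg.mpr (hmin _)
  rw [le_div_iff₀ hk2]
  have h1 : (f (x k) - f xstar) * (k : ℝ) ^ 2 ≤ (f (x k) - f xstar) * (4 * (ζ * L) * A k) :=
    mul_le_mul_of_nonneg_left hA4 hfge
  have h4c : (0 : ℝ) < 4 * (ζ * L) := by positivity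
  have h2 := mul_le_mul_of_nonneg_left hbound h4c.le
  nlinarith [h1, h2]
end
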